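/- For every function u in H^1(ℝ) and every real q ≥ 2, the Gagliardo–Nirenberg inequality holds: ‖u‖_{L^q(ℝ)}^q ≤ 2^{q/2 − 1} · ‖u‖_{L^2(ℝ)}^{q/2 + 1} · ‖u'‖_{L^2(ℝ)}^{q/2 − 1}. -/

import Mathlib

open MeasureTheory ENNReal

/-- Gagliardo–Nirenberg inequality on the line: for `u ∈ H¹(ℝ)` (with derivative `u'`)
and every `q ≥ 2`, `‖u‖_q^q ≤ 2^(q/2-1) ‖u‖_2^(q/2+1) ‖u'‖_2^(q/2-1)`. -/
theorem gagliardo_nirenberg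
    (u u' : ℝ → ℝ) (hderiv : ∀ x, HasDerivAt u (u' x) x)
    (hu : MemLp u 2 volume) (hu' : MemLp u' 2 volume)
    (q : ℝ) (hq : 2 ≤ q) :
    eLpNorm u (ENNReal.ofReal q) volume ^ q ≤
      (2 : ℝ≥0∞) ^ (q / 2 - 1) * eLpNorm u 2 volume ^ (q / 2 + 1) *
        eLpNorm u' 2 volume ^ (q / 2 - 1) := by
  set A := eLpNorm u 2 volume with hA
  set B := eLpNorm u' 2 volume with hB
  have hq0 : (0:ℝ) < q := lt_of_lt_of_le (by norm_num) hq
  -- integrability facts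
  have hsq : Integrable (fun x => u x ^ 2) volume := hu.integrable_sq
  have hsq' : Integrable (fun x => u' x ^ 2) volume := hu'.integrable_sq
  have hmulm : AEStronglyMeasurable (fun x => u x * u' x) volume := hu.1.mul hu'.1
  have hmul : Integrable (fun x => u x * u' x) volume := by
    refine (hsq.add hsq').mono hmulm (Filter.Eventually.of_forall fun x => ?_)
    have h1 : |u x| * |u' x| ≤ u x ^ 2 + u' x ^ 2 := by
      nlinarith [sq_nonneg (|u x| - |u' x|), sq_abs (u x), sq_abs (u' x), abs_nonneg (u x),
        abs_nonneg (u' x)]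
    have h2 : (0:ℝ) ≤ u x ^ 2 + u' x ^ 2 := by positivity
    simpa [Real.norm_eq_abs, abs_mul, abs_of_nonneg h2] using h1
  set I : ℝ := ∫ x, |u x * u' x| with hI
  have hIint : Integrable (fun x => |u x * u' x|) volume := hmul.abs
  -- derivative of u^2
  have hgderiv : ∀ x, HasDerivAt (fun y => u y ^ 2) (2 * (u x * u' x)) x := by
    intro x
    have h := (hderiv x).mul (hderiv x)
    have h2 : HasDerivAt (fun y => u y ^ 2) (u' x * u x + u x * u' x) x := by
      rw [show (fun y => u y ^ 2) = u * u from funext fun y => by simp [pow_two]]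
      exact h
    have h3 : u' x * u x + u x * u' x = 2 * (u x * u' x) := by ring
    rwa [h3] at h2
  have hg'int : Integrable (fun x => 2 * (u x * u' x)) volume := hmul.const_mul 2
  -- u^2 tends to 0 at -∞
  have htendsto : Filter.Tendsto (fun y => u y ^ 2) Filter.atBot (nhds 0) :=
    tendsto_zero_of_hasDerivAt_of_integrableOn_Iic (a := 0)
      (fun x _ => hgderiv x) hg'int.integrableOn hsq.integrableOn
  -- pointwise bound : u x ^ 2 ≤ 2 * I
  have hpt : ∀ x, u x ^ 2 ≤ 2 * I := by
    intro x
    have hftc : ∫ t in Set.Iic x, 2 * (u t * u' t) = u x ^ 2 - 0 :=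
      integral_Iic_of_hasDerivAt_of_tendsto' (fun t _ => hgderiv t)
        hg'int.integrableOn htendsto
    rw [sub_zero] at hftc
    calc u x ^ 2 = ∫ t in Set.Iic x, 2 * (u t * u' t) := hftc.symm
      _ ≤ ∫ t in Set.Iic x, 2 * |u t * u' t| := by
          refine setIntegral_mono_on hg'int.integrableOn
            ((hIint.const_mul 2).integrableOn) measurableSet_Iic fun t _ => ?_
          have := le_abs_self (u t * u' t)
          linarith
      _ ≤ ∫ t, 2 * |u t * u' t| := by
          refine setIntegral_le_integral (hIint.const_mul 2)
            (Filter.Eventually.of_forall fun t => ?_)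
          positivity
      _ = 2 * I := by rw [hI, integral_const_mul]
  -- translate to ℝ≥0∞ : (‖u x‖₊)^2 ≤ 2 * A * B
  have hI_eq : ENNReal.ofReal I = ∫⁻ x, (‖u x‖₊ : ℝ≥0∞) * (‖u' x‖₊ : ℝ≥0∞) := by
    rw [hI, ofReal_integral_eq_lintegral_ofReal hIint
      (Filter.Eventually.of_forall fun x => abs_nonneg _)]
    congr 1
    ext x
    rw [← Real.norm_eq_abs, ofReal_norm, enorm_eq_nnnorm, nnnorm_mul, ENNReal.coe_mul]
  have hA2 : A = (∫⁻ x, (‖u x‖₊ : ℝ≥0∞) ^ (2:ℝ)) ^ (1/(2:ℝ)) := by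
    rw [hA, eLpNorm_eq_lintegral_rpow_enorm_toReal (by norm_num) (by norm_num)]
    norm_num
    rfl
  have hB2 : B = (∫⁻ x, (‖u' x‖₊ : ℝ≥0∞) ^ (2:ℝ)) ^ (1/(2:ℝ)) := by
    rw [hB, eLpNorm_eq_lintegral_rpow_enorm_toReal (by norm_num) (by norm_num)]
    norm_num
    rfl
  have hCS : ENNReal.ofReal I ≤ A * B := by
    rw [hI_eq, hA2, hB2]
    exact ENNReal.lintegral_mul_le_Lp_mul_Lq volume (Real.holderConjugate_iff_eq_conjExponent
      (by norm_num) |>.mpr (by norm_num)) hu.1.enorm hu'.1.enorm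
  have hptE : ∀ x, (‖u x‖₊ : ℝ≥0∞) ^ (2:ℝ) ≤ 2 * A * B := by
    intro x
    have h1 : (‖u x‖₊ : ℝ≥0∞) ^ (2:ℝ) = ENNReal.ofReal (u x ^ 2) := by
      rw [← enorm_eq_nnnorm, ← ofReal_norm,
        ENNReal.ofReal_rpow_of_nonneg (norm_nonneg _) (by norm_num : (0:ℝ) ≤ 2)]
      congr 1
      rw [Real.rpow_two, Real.norm_eq_abs, sq_abs]
    rw [h1]
    calc ENNReal.ofReal (u x ^ 2) ≤ ENNReal.ofReal (2 * I) := ENNReal.ofReal_le_ofReal (hpt x)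
      _ = 2 * ENNReal.ofReal I := by
          rw [ENNReal.ofReal_mul (by norm_num)]; norm_num
      _ ≤ 2 * (A * B) := by exact mul_le_mul_right hCS 2
      _ = 2 * A * B := by ring
  -- main computation
  have hqtop : ENNReal.ofReal q ≠ ⊤ := ofReal_ne_top
  have hqzero : ENNReal.ofReal q ≠ 0 := by
    simp [ENNReal.ofReal_eq_zero, not_le, hq0]
  have hLHS : eLpNorm u (ENNReal.ofReal q) volume ^ q
      = ∫⁻ x, (‖u x‖₊ : ℝ≥0∞) ^ q := by
    rw [eLpNorm_eq_lintegral_rpow_enorm_toReal hqzero hqtop, ENNReal.toReal_ofReal hq0.le,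
      ← ENNReal.rpow_mul, one_div, inv_mul_cancel₀ hq0.ne', ENNReal.rpow_one]
    rfl
  have hexp : (0:ℝ) ≤ q/2 - 1 := by linarith
  have hptq : ∀ x, (‖u x‖₊ : ℝ≥0∞) ^ q ≤ (2*A*B) ^ (q/2-1) * (‖u x‖₊ : ℝ≥0∞) ^ (2:ℝ) := by
    intro x
    have h1 : (‖u x‖₊ : ℝ≥0∞) ^ q
        = (‖u x‖₊ : ℝ≥0∞) ^ ((2:ℝ) * (q/2-1)) * (‖u x‖₊ : ℝ≥0∞) ^ (2:ℝ) := by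
      rw [← ENNReal.rpow_add_of_nonneg _ _ (by linarith) (by norm_num)]
      ring_nf
    rw [h1, ENNReal.rpow_mul]
    exact mul_le_mul_left (ENNReal.rpow_le_rpow (hptE x) hexp) _
  have hA2' : (∫⁻ x, (‖u x‖₊ : ℝ≥0∞) ^ (2:ℝ)) = A ^ (2:ℝ) := by
    rw [hA2, ← ENNReal.rpow_mul]
    norm_num
  calc eLpNorm u (ENNReal.ofReal q) volume ^ q
      = ∫⁻ x, (‖u x‖₊ : ℝ≥0∞) ^ q := hLHS
    _ ≤ ∫⁻ x, (2*A*B) ^ (q/2-1) * (‖u x‖₊ : ℝ≥0∞) ^ (2:ℝ) :=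
        lintegral_mono fun x => hptq x
    _ = (2*A*B) ^ (q/2-1) * ∫⁻ x, (‖u x‖₊ : ℝ≥0∞) ^ (2:ℝ) :=
        lintegral_const_mul' _ _ (ENNReal.rpow_ne_top_of_nonneg hexp
          (ENNReal.mul_ne_top (ENNReal.mul_ne_top (by norm_num) hu.2.ne) hu'.2.ne))
    _ = (2*A*B) ^ (q/2-1) * A ^ (2:ℝ) := by rw [hA2']
    _ = (2:ℝ≥0∞) ^ (q/2-1) * A ^ (q/2+1) * B ^ (q/2-1) := by
        rw [ENNReal.mul_rpow_of_nonneg _ _ hexp, ENNReal.mul_rpow_of_nonneg _ _ hexp]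
        have : A ^ (q/2-1) * A ^ (2:ℝ) = A ^ (q/2+1) := by
          rw [← ENNReal.rpow_add_of_nonneg _ _ hexp (by norm_num)]
          ring_nf
        rw [← this]
        ring
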